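/- Let G = (V,E) be a finite simple undirected graph on n vertices, where n is odd, and let γ = ⌈n/2⌉. If G is γ-robust, then the number of edges satisfies |E| ≥ 3γ(γ-1)/2. -/

import Mathlib

open Finset

variable {V : Type*}

/-- A finset `S` is `r`-reachable in `G` if some vertex of `S` has at least `r`
neighbors outside `S`. -/
def RReachable [Fintype V] [DecidableEq V] (G : SimpleGraph V) [DecidableRel G.Adj]
    (r : ℕ) (S : Finset V) : Prop :=
  ∃ i ∈ S, r ≤ (G.neighborFinset i \ S).card

/-- `G` is `r`-robust (for an integer `r ≥ 1`) if for every pair of nonempty disjoint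
subsets `S1, S2` of the vertex set, at least one of them is `r`-reachable. -/
def RRobust [Fintype V] [DecidableEq V] (G : SimpleGraph V) [DecidableRel G.Adj]
    (r : ℕ) : Prop :=
  1 ≤ r ∧ ∀ S1 S2 : Finset V, S1.Nonempty → S2.Nonempty → Disjoint S1 S2 →
    RReachable G r S1 ∨ RReachable G r S2

-- star lemma
lemma star_lemma [Fintype V] [DecidableEq V] (G : SimpleGraph V) [DecidableRel G.Adj]
    {γ : ℕ} (hcard : Fintype.card V = 2 * γ - 1) (hγ1 : 1 ≤ γ)
    (hrob : RRobust G γ) (S : Finset V) (hne : S.Nonempty) (hS : S.card ≤ γ - 1) :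
    ∃ v ∈ S, (Gᶜ.neighborFinset v \ S).card + S.card + 1 ≤ γ := by
  have hSc : (Sᶜ : Finset V).Nonempty := by
    rw [← Finset.card_pos, Finset.card_compl, hcard]
    omega
  have hdisj : Disjoint S (Sᶜ : Finset V) := disjoint_compl_right
  rcases hrob.2 S Sᶜ hne hSc hdisj with h | h
  · obtain ⟨v, hvS, hv⟩ := h
    refine ⟨v, hvS, ?_⟩
    -- partition Sᶜ
    have hpart : (Sᶜ : Finset V) = (G.neighborFinset v \ S) ∪ (Gᶜ.neighborFinset v \ S) := by
      ext u
      simp only [Finset.mem_compl, Finset.mem_union, Finset.mem_sdiff,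
        SimpleGraph.mem_neighborFinset, SimpleGraph.compl_adj]
      constructor
      · intro hu
        by_cases hadj : G.Adj v u
        · exact Or.inl ⟨hadj, hu⟩
        · refine Or.inr ⟨⟨?_, hadj⟩, hu⟩
          rintro rfl; exact hu hvS
      · rintro (⟨_, hu⟩ | ⟨_, hu⟩) <;> exact hu
    have hdisj2 : Disjoint (G.neighborFinset v \ S) (Gᶜ.neighborFinset v \ S) := by
      simp only [Finset.disjoint_left, Finset.mem_sdiff, SimpleGraph.mem_neighborFinset,
        SimpleGraph.compl_adj]
      rintro u ⟨h1, _⟩ ⟨⟨_, h2⟩, _⟩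
      exact h2 h1
    have hcc : (Sᶜ : Finset V).card = (G.neighborFinset v \ S).card +
        (Gᶜ.neighborFinset v \ S).card := by
      rw [hpart, Finset.card_union_of_disjoint hdisj2]
    rw [Finset.card_compl, hcard] at hcc
    have hle : S.card ≤ 2 * γ - 1 := by
      have h : S.card ≤ Fintype.card V := Finset.card_le_univ S
      omega
    omega
  · exfalso
    obtain ⟨v, hvS, hv⟩ := h
    have hsub : G.neighborFinset v \ (Sᶜ : Finset V) ⊆ S := by
      intro u hu
      simp only [Finset.mem_sdiff, Finset.mem_compl, not_not] at hu
      exact hu.2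
    have := Finset.card_le_card hsub
    omega

-- clique construction
lemma clique_lemma [Fintype V] [DecidableEq V] (G : SimpleGraph V) [DecidableRel G.Adj]
    {γ : ℕ} (hcard : Fintype.card V = 2 * γ - 1) (hγ2 : 2 ≤ γ)
    (hrob : RRobust G γ) :
    ∃ I : Finset V, I.card = γ ∧ ∀ a ∈ I, ∀ b ∈ I, a ≠ b → G.Adj a b := by
  suffices h : ∀ i : ℕ, i ≤ γ → ∃ I : Finset V, I.card = i ∧
      ∀ a ∈ I, ∀ b ∈ I, a ≠ b → G.Adj a b by
    exact h γ le_rfl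
  intro i
  induction i with
  | zero => exact fun _ => ⟨∅, by simp⟩
  | succ i ih =>
    intro hi
    obtain ⟨I, hIcard, hIcl⟩ := ih (by omega)
    -- pick S ⊆ Iᶜ with card γ-1
    have hIc : γ - 1 ≤ (Iᶜ : Finset V).card := by
      rw [Finset.card_compl, hcard, hIcard]
      omega
    obtain ⟨S, hSsub, hScard⟩ := Finset.exists_subset_card_eq (s := (Iᶜ : Finset V)) (n := γ - 1) hIc
    have hSne : S.Nonempty := by
      rw [← Finset.card_pos, hScard]; omega
    obtain ⟨v, hvS, hv⟩ := star_lemma G hcard (by omega) hrob S hSne (le_of_eq hScard)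
    rw [hScard] at hv
    have hzero : (Gᶜ.neighborFinset v \ S).card = 0 := by omega
    rw [Finset.card_eq_zero] at hzero
    have hvnI : v ∉ I := by
      have := hSsub hvS
      rwa [Finset.mem_compl] at this
    have hadjI : ∀ b ∈ I, G.Adj v b := by
      intro b hbI
      by_contra hnadj
      have hbv : v ≠ b := by rintro rfl; exact hvnI hbI
      have hbS : b ∉ S := by
        intro hbS
        have := hSsub hbS
        rw [Finset.mem_compl] at this
        exact this hbI
      have : b ∈ Gᶜ.neighborFinset v \ S := by
        simp only [Finset.mem_sdiff, SimpleGraph.mem_neighborFinset, SimpleGraph.compl_adj]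
        exact ⟨⟨hbv, hnadj⟩, hbS⟩
      rw [hzero] at this
      exact absurd this (Finset.notMem_empty b)
    refine ⟨insert v I, ?_, ?_⟩
    · rw [Finset.card_insert_of_notMem hvnI, hIcard]
    · intro a ha b hb hab
      rw [Finset.mem_insert] at ha hb
      rcases ha with ha | ha <;> rcases hb with hb | hb
      · exact absurd (ha.trans hb.symm) hab
      · subst ha; exact hadjI b hb
      · subst hb; exact (hadjI a ha).symm
      · exact hIcl a ha b hb hab

-- peeling lemma
lemma peel_lemma [Fintype V] [DecidableEq V] (G : SimpleGraph V) [DecidableRel G.Adj]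
    {γ : ℕ} (hcard : Fintype.card V = 2 * γ - 1) (hγ1 : 1 ≤ γ)
    (hrob : RRobust G γ) :
    ∀ m : ℕ, m + 1 ≤ γ → ∀ R : Finset V, R.card = m →
      2 * (Gᶜ.edgeFinset.filter (fun e => ∃ v ∈ R, v ∈ e)).card + m * m + 3 * m
        ≤ 2 * m * γ := by
  intro m
  induction m with
  | zero =>
    intro _ R hR
    rw [Finset.card_eq_zero] at hR
    subst hR
    simp
  | succ m ih =>
    intro hm R hR
    have hRne : R.Nonempty := by rw [← Finset.card_pos, hR]; omega
    obtain ⟨w, hwR, hw⟩ := star_lemma G hcard hγ1 hrob R hRne (by omega)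
    rw [hR] at hw
    set R' := R.erase w with hR'def
    have hR'card : R'.card = m := by
      rw [hR'def, Finset.card_erase_of_mem hwR, hR]
      omega
    have hsub : (Gᶜ.edgeFinset.filter (fun e => ∃ v ∈ R, v ∈ e)) ⊆
        (Gᶜ.edgeFinset.filter (fun e => ∃ v ∈ R', v ∈ e)) ∪
        (Gᶜ.neighborFinset w \ R).image (fun u => s(w, u)) := by
      intro e
      induction e using Sym2.ind with
      | _ a b =>
        intro he
        rw [Finset.mem_filter] at he
        obtain ⟨heE, v, hvR, hve⟩ := he
        by_cases h' : ∃ u ∈ R', u ∈ s(a, b)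
        · exact Finset.mem_union_left _ (Finset.mem_filter.mpr ⟨heE, h'⟩)
        · refine Finset.mem_union_right _ ?_
          push_neg at h'
          have hvw : v = w := by
            by_contra hne
            exact h' v (Finset.mem_erase.mpr ⟨hne, hvR⟩) hve
          subst hvw
          rw [SimpleGraph.mem_edgeFinset, SimpleGraph.mem_edgeSet] at heE
          rw [Sym2.mem_iff] at hve
          rcases hve with rfl | rfl
          · refine Finset.mem_image.mpr ⟨b, ?_, rfl⟩
            rw [Finset.mem_sdiff, SimpleGraph.mem_neighborFinset]
            refine ⟨heE, fun hbR => ?_⟩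
            have hbw : b ≠ v := fun h => heE.ne h.symm
            exact h' b (Finset.mem_erase.mpr ⟨hbw, hbR⟩) (Sym2.mem_mk_right v b)
          · refine Finset.mem_image.mpr ⟨a, ?_, Sym2.eq_swap⟩
            rw [Finset.mem_sdiff, SimpleGraph.mem_neighborFinset]
            refine ⟨heE.symm, fun haR => ?_⟩
            have haw : a ≠ v := fun h => heE.ne h
            exact h' a (Finset.mem_erase.mpr ⟨haw, haR⟩) (Sym2.mem_mk_left a v)
    have hb1 := Finset.card_le_card hsub
    have hb2 := Finset.card_union_le
      (Gᶜ.edgeFinset.filter (fun e => ∃ v ∈ R', v ∈ e))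
      ((Gᶜ.neighborFinset w \ R).image (fun u => s(w, u)))
    have hb3 := Finset.card_image_le (s := Gᶜ.neighborFinset w \ R)
      (f := fun u => s(w, u))
    have hIH := ih (by omega) R' hR'card
    have hk1 : (m + 1) * (m + 1) = m * m + 2 * m + 1 := by ring
    have hk2 : 2 * (m + 1) * γ = 2 * m * γ + 2 * γ := by ring
    omega


/-- If `G` is a graph on an odd number `n` of vertices and `γ = ⌈n/2⌉`, and `G` is
`γ`-robust, then `|E| ≥ 3γ(γ-1)/2`. -/
theorem stmt1 [Fintype V] [DecidableEq V] (G : SimpleGraph V) [DecidableRel G.Adj]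
    (n γ : ℕ) (hn : Fintype.card V = n) (hodd : Odd n) (hγ : γ = (n + 1) / 2)
    (hrob : RRobust G γ) :
    3 * γ * (γ - 1) / 2 ≤ G.edgeFinset.card := by
  obtain ⟨k0, hk0⟩ := hodd
  have hcard : Fintype.card V = 2 * γ - 1 := by omega
  by_cases hγ2 : 2 ≤ γ
  case neg =>
    have : γ ≤ 1 := by omega
    interval_cases γ <;> simp
  -- main case
  obtain ⟨k, rfl⟩ : ∃ k, γ = k + 2 := ⟨γ - 2, by omega⟩
  -- clique
  obtain ⟨I, hIcard, hIcl⟩ := clique_lemma G hcard hγ2 hrob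
  -- every compl-edge meets R := Iᶜ
  set R := (Iᶜ : Finset V) with hRdef
  have hRcard : R.card = (k + 2) - 1 := by
    rw [hRdef, Finset.card_compl, hcard, hIcard]; omega
  have hall : Gᶜ.edgeFinset.filter (fun e => ∃ v ∈ R, v ∈ e) = Gᶜ.edgeFinset := by
    apply Finset.filter_true_of_mem
    intro e
    induction e using Sym2.ind with
    | _ a b =>
      intro he
      rw [SimpleGraph.mem_edgeFinset, SimpleGraph.mem_edgeSet, SimpleGraph.compl_adj] at he
      by_cases haR : a ∈ R
      · exact ⟨a, haR, Sym2.mem_mk_left a b⟩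
      · refine ⟨b, ?_, Sym2.mem_mk_right a b⟩
        rw [hRdef, Finset.mem_compl] at haR ⊢
        rw [not_not] at haR
        intro hbI
        exact he.2 (hIcl a haR b hbI he.1)
  have hpeel := peel_lemma G hcard (by omega) hrob ((k + 2) - 1) (by omega) R hRcard
  rw [hall] at hpeel
  -- edge count of compl
  have hU : G.edgeFinset ∪ Gᶜ.edgeFinset = (⊤ : SimpleGraph V).edgeFinset := by
    ext e
    induction e using Sym2.ind with
    | _ a b =>
      simp only [Finset.mem_union, SimpleGraph.mem_edgeFinset, SimpleGraph.mem_edgeSet,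
        SimpleGraph.top_adj, SimpleGraph.compl_adj]
      constructor
      · rintro (h | ⟨h, _⟩)
        · exact h.ne
        · exact h
      · intro h
        by_cases hadj : G.Adj a b
        · exact Or.inl hadj
        · exact Or.inr ⟨h, hadj⟩
  have hsum : G.edgeFinset.card + Gᶜ.edgeFinset.card =
      (Fintype.card V).choose 2 := by
    rw [← SimpleGraph.card_edgeFinset_top_eq_card_choose_two]
    rw [← Finset.card_union_of_disjoint
      (SimpleGraph.disjoint_edgeFinset.mpr disjoint_compl_right)]
    rw [hU]
  rw [hcard, Nat.choose_two_right] at hsum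
  have hch : (2 * (k + 2) - 1) * (2 * (k + 2) - 1 - 1) / 2 = 2 * (k * k) + 5 * k + 3 := by
    have h1 : 2 * (k + 2) - 1 = 2 * k + 3 := by omega
    rw [h1]
    have h2 : 2 * k + 3 - 1 = 2 * k + 2 := by omega
    rw [h2]
    have h3 : (2 * k + 3) * (2 * k + 2) = 2 * (2 * (k * k) + 5 * k + 3) := by ring
    omega
  rw [hch] at hsum
  have hgoal : 3 * (k + 2) * (k + 2 - 1) = 3 * (k * k) + 9 * k + 6 := by
    have h1 : k + 2 - 1 = k + 1 := by omega
    rw [h1]; ring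
  rw [hgoal]
  have hp1 : (k + 2 - 1) * (k + 2 - 1) = k * k + 2 * k + 1 := by
    have h1 : k + 2 - 1 = k + 1 := by omega
    rw [h1]; ring
  have hp2 : 2 * (k + 2 - 1) * (k + 2) = 2 * (k * k) + 6 * k + 4 := by
    have h1 : k + 2 - 1 = k + 1 := by omega
    rw [h1]; ring
  omega
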